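/- Let φ : ℝ → ℝ be three times continuously differentiable and let x ∈ ℝ. Then the function h ↦ (1/2) [ ((φ(x+h) - φ(x))/h)² + ((φ(x) - φ(x-h))/h)² ] - (φ'(x))², defined for h ≠ 0, is O(h²) as h → 0. -/

import Mathlib

open Filter Topology Asymptotics

/-- Bootstrapping: if `g 0 = 0` and `deriv g = O(h^k)` near `0`, then `g = O(h^(k+1))`. -/
lemma formII_bootstrap {g : ℝ → ℝ} {k : ℕ} (hg : Differentiable ℝ g) (h0 : g 0 = 0)
    (hO : (deriv g) =O[𝓝 (0 : ℝ)] fun h => h ^ k) :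
    g =O[𝓝 (0 : ℝ)] fun h => h ^ (k + 1) := by
  obtain ⟨C, hC⟩ := hO.bound
  rw [Metric.eventually_nhds_iff] at hC
  obtain ⟨ε, hε, hball⟩ := hC
  apply IsBigO.of_bound (max C 0)
  rw [Metric.eventually_nhds_iff]
  refine ⟨ε, hε, fun h hh => ?_⟩
  have hh' : |h| < ε := by simpa [Real.dist_eq] using hh
  have key : ‖g h - g 0‖ ≤ (max C 0 * |h| ^ k) * ‖h - (0 : ℝ)‖ := by
    refine (convex_Icc (-|h|) |h|).norm_image_sub_le_of_norm_deriv_le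
      (fun t _ => hg t) (fun t ht => ?_) ?_ ?_
    · have hth : |t| ≤ |h| := abs_le.mpr ⟨ht.1, ht.2⟩
      have h1 : ‖deriv g t‖ ≤ C * ‖t ^ k‖ := hball (by
        simpa [Real.dist_eq] using lt_of_le_of_lt hth hh')
      calc ‖deriv g t‖ ≤ C * ‖t ^ k‖ := h1
        _ ≤ max C 0 * |h| ^ k := by
            have h2 : ‖t ^ k‖ ≤ |h| ^ k := by
              rw [Real.norm_eq_abs, abs_pow]
              exact pow_le_pow_left₀ (abs_nonneg t) hth k
            have h3 : (0 : ℝ) ≤ ‖t ^ k‖ := norm_nonneg _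
            exact mul_le_mul (le_max_left _ _) h2 h3 (le_max_right _ _)
    · exact ⟨neg_nonpos.mpr (abs_nonneg h), abs_nonneg h⟩
    · exact ⟨neg_abs_le h, le_abs_self h⟩
  have : ‖g h‖ ≤ max C 0 * |h| ^ (k + 1) := by
    rw [h0, sub_zero] at key
    calc ‖g h‖ ≤ (max C 0 * |h| ^ k) * ‖h - (0 : ℝ)‖ := key
      _ = max C 0 * |h| ^ (k + 1) := by
          rw [sub_zero, Real.norm_eq_abs, pow_succ]; ring
  simpa [abs_pow] using this

/-- The order-2 Taylor remainder of a `C³` function is `O(h³)`. -/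
lemma formII_taylor2 (ψ : ℝ → ℝ) (hψ : ContDiff ℝ 3 ψ) (x : ℝ) :
    (fun h : ℝ => ψ (x + h) - ψ x - deriv ψ x * h - deriv (deriv ψ) x * h ^ 2 / 2)
      =O[𝓝 (0 : ℝ)] fun h => h ^ 3 := by
  have h3 : ContDiff ℝ (2 + 1 : ℕ) ψ := by exact_mod_cast hψ
  rw [show ((2 + 1 : ℕ) : WithTop ℕ∞) = (2 : WithTop ℕ∞) + 1 by norm_cast] at h3
  obtain ⟨hd1, -, h2⟩ := contDiff_succ_iff_deriv.mp h3
  rw [show (2 : WithTop ℕ∞) = (1 : WithTop ℕ∞) + 1 by norm_cast] at h2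
  obtain ⟨hd2, -, h1⟩ := contDiff_succ_iff_deriv.mp h2
  have hd3 : Differentiable ℝ (deriv (deriv ψ)) := h1.differentiable one_ne_zero
  set d1 := deriv ψ x with hd1x
  set d2 := deriv (deriv ψ) x with hd2x
  -- second difference level
  have key2 : (fun h : ℝ => deriv (deriv ψ) (x + h) - d2) =O[𝓝 (0 : ℝ)] fun h => h ^ 1 := by
    have hdiff : DifferentiableAt ℝ (fun h : ℝ => deriv (deriv ψ) (x + h)) 0 :=
      (hd3 (x + 0)).comp 0 ((differentiable_id.const_add x) 0)
    have := hdiff.isBigO_sub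
    simpa using this
  -- first level: F1 h = ψ'(x+h) - d1 - d2 * h
  have hasF1 : ∀ h : ℝ, HasDerivAt (fun t : ℝ => deriv ψ (x + t) - d1 - d2 * t)
      (deriv (deriv ψ) (x + h) - d2) h := by
    intro h
    have hcomp : HasDerivAt (fun t : ℝ => deriv ψ (x + t)) (deriv (deriv ψ) (x + h) * 1) h :=
      HasDerivAt.comp h ((hd2 (x + h)).hasDerivAt) ((hasDerivAt_id h).const_add x)
    have := (hcomp.sub_const d1).sub ((hasDerivAt_id h).const_mul d2)
    simp at this; exact this
  have hF1 : (fun h : ℝ => deriv ψ (x + h) - d1 - d2 * h) =O[𝓝 (0 : ℝ)] fun h => h ^ 2 := by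
    have hdiffF1 : Differentiable ℝ (fun t : ℝ => deriv ψ (x + t) - d1 - d2 * t) :=
      fun t => (hasF1 t).differentiableAt
    have hder : deriv (fun t : ℝ => deriv ψ (x + t) - d1 - d2 * t)
        = fun h : ℝ => deriv (deriv ψ) (x + h) - d2 := funext fun h => (hasF1 h).deriv
    have := formII_bootstrap hdiffF1 (by simp [hd1x]) (hder ▸ key2)
    exact this
  -- zeroth level
  have hasF : ∀ h : ℝ, HasDerivAt (fun t : ℝ => ψ (x + t) - ψ x - d1 * t - d2 * t ^ 2 / 2)
      (deriv ψ (x + h) - d1 - d2 * h) h := by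
    intro h
    have hcomp : HasDerivAt (fun t : ℝ => ψ (x + t)) (deriv ψ (x + h) * 1) h :=
      HasDerivAt.comp h ((hd1 (x + h)).hasDerivAt) ((hasDerivAt_id h).const_add x)
    have hsq : HasDerivAt (fun t : ℝ => d2 * t ^ 2 / 2) (d2 * (2 * h ^ 1) / 2) h :=
      ((hasDerivAt_pow 2 h).const_mul d2).div_const 2
    have := ((hcomp.sub_const (ψ x)).sub ((hasDerivAt_id h).const_mul d1)).sub hsq
    refine this.congr_deriv ?_
    ring
  have hdiffF : Differentiable ℝ (fun t : ℝ => ψ (x + t) - ψ x - d1 * t - d2 * t ^ 2 / 2) :=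
    fun t => (hasF t).differentiableAt
  have hder : deriv (fun t : ℝ => ψ (x + t) - ψ x - d1 * t - d2 * t ^ 2 / 2)
      = fun h : ℝ => deriv ψ (x + h) - d1 - d2 * h := funext fun h => (hasF h).deriv
  have := formII_bootstrap hdiffF (by simp) (hder ▸ hF1)
  exact this

/-- Second-order consistency of the Form II discretized gradient-square term:
the average of the squared forward and backward difference quotients approximates
`(φ'(x))²` up to `O(h²)` as `h → 0`. -/
theorem formII_gradient_square_second_order (φ : ℝ → ℝ) (hφ : ContDiff ℝ 3 φ) (x : ℝ) :
    (fun h : ℝ =>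
        (1 / 2) * (((φ (x + h) - φ x) / h) ^ 2 + ((φ x - φ (x - h)) / h) ^ 2)
          - (deriv φ x) ^ 2)
      =O[𝓝[≠] (0 : ℝ)] (fun h : ℝ => h ^ 2) := by
  set d1 := deriv φ x with hd1x
  set d2 := deriv (deriv φ) x with hd2x
  -- reflected function for the backward difference
  set ψ : ℝ → ℝ := fun t => φ (2 * x - t) with hψdef
  have hψ : ContDiff ℝ 3 ψ := hφ.comp (contDiff_const.sub contDiff_id)
  have hφ1 : Differentiable ℝ φ := hφ.differentiable (by norm_num)
  have hφ2 : Differentiable ℝ (deriv φ) := by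
    have h3 : ContDiff ℝ (2 + 1 : ℕ) φ := by exact_mod_cast hφ
    rw [show ((2 + 1 : ℕ) : WithTop ℕ∞) = (2 : WithTop ℕ∞) + 1 by norm_cast] at h3
    obtain ⟨-, -, h2⟩ := contDiff_succ_iff_deriv.mp h3
    exact h2.differentiable (by norm_num)
  -- derivatives of ψ
  have hψ1 : ∀ t : ℝ, HasDerivAt ψ (-(deriv φ (2 * x - t))) t := by
    intro t
    have := HasDerivAt.comp t ((hφ1 (2 * x - t)).hasDerivAt) ((hasDerivAt_id t).const_sub (2 * x))
    simp at this; exact this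
  have hψd : deriv ψ = fun t => -(deriv φ (2 * x - t)) := funext fun t => (hψ1 t).deriv
  have hψ2 : ∀ t : ℝ, HasDerivAt (deriv ψ) (deriv (deriv φ) (2 * x - t)) t := by
    intro t
    rw [hψd]
    have := HasDerivAt.comp t ((hφ2 (2 * x - t)).hasDerivAt) ((hasDerivAt_id t).const_sub (2 * x))
    have := this.neg
    simp at this; exact this
  have hψdx : deriv ψ x = -d1 := by rw [hψd]; simp [hd1x]; ring_nf
  have hψddx : deriv (deriv ψ) x = d2 := by
    rw [(hψ2 x).deriv]; simp [hd2x]; ring_nf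
  -- Taylor remainders
  have hF : (fun h : ℝ => φ (x + h) - φ x - d1 * h - d2 * h ^ 2 / 2)
      =O[𝓝 (0 : ℝ)] fun h => h ^ 3 := formII_taylor2 φ hφ x
  have hG : (fun h : ℝ => φ (x - h) - φ x + d1 * h - d2 * h ^ 2 / 2)
      =O[𝓝 (0 : ℝ)] fun h => h ^ 3 := by
    have := formII_taylor2 ψ hψ x
    rw [hψdx, hψddx] at this
    refine this.congr' (Filter.Eventually.of_forall fun h => ?_) (Filter.Eventually.of_forall fun h => rfl)
    simp only [hψdef]
    ring_nf
  -- pass to the punctured neighborhood and divide by h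
  set F : ℝ → ℝ := fun h => φ (x + h) - φ x - d1 * h - d2 * h ^ 2 / 2 with hFdef
  set G : ℝ → ℝ := fun h => φ (x - h) - φ x + d1 * h - d2 * h ^ 2 / 2 with hGdef
  have hne : ∀ᶠ h : ℝ in 𝓝[≠] (0 : ℝ), h ≠ 0 := eventually_mem_nhdsWithin
  have hA : (fun h : ℝ => F h / h) =O[𝓝[≠] (0 : ℝ)] fun h => h ^ 2 := by
    have h1 : (fun h : ℝ => F h * h⁻¹) =O[𝓝[≠] (0 : ℝ)] fun h => h ^ 3 * h⁻¹ :=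
      (hF.mono nhdsWithin_le_nhds).mul (isBigO_refl (fun h : ℝ => h⁻¹) _)
    refine h1.congr' (Filter.Eventually.of_forall fun h => by simp [div_eq_mul_inv])
      (hne.mono fun h hh => ?_)
    field_simp
  have hB : (fun h : ℝ => G h / h) =O[𝓝[≠] (0 : ℝ)] fun h => h ^ 2 := by
    have h1 : (fun h : ℝ => G h * h⁻¹) =O[𝓝[≠] (0 : ℝ)] fun h => h ^ 3 * h⁻¹ :=
      (hG.mono nhdsWithin_le_nhds).mul (isBigO_refl (fun h : ℝ => h⁻¹) _)
    refine h1.congr' (Filter.Eventually.of_forall fun h => by simp [div_eq_mul_inv])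
      (hne.mono fun h hh => ?_)
    field_simp
  -- h² is O(1) on the punctured neighborhood (used to lower powers)
  have hsq_small : (fun h : ℝ => h ^ 2) =O[𝓝[≠] (0 : ℝ)] (fun _ : ℝ => (1 : ℝ)) := by
    refine IsBigO.of_bound 1 ?_
    filter_upwards [eventually_nhdsWithin_of_eventually_nhds
      (Metric.eventually_nhds_iff.mpr ⟨1, one_pos, fun y hy => hy⟩)] with h hh
    have : |h| < 1 := by simpa [Real.dist_eq] using hh
    have h2 : |h| ^ 2 ≤ 1 := pow_le_one₀ (abs_nonneg h) this.le
    simpa [abs_pow] using h2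
  have hh_small : (fun h : ℝ => h) =O[𝓝[≠] (0 : ℝ)] (fun _ : ℝ => (1 : ℝ)) := by
    refine IsBigO.of_bound 1 ?_
    filter_upwards [eventually_nhdsWithin_of_eventually_nhds
      (Metric.eventually_nhds_iff.mpr ⟨1, one_pos, fun y hy => hy⟩)] with h hh
    simpa [Real.dist_eq] using le_of_lt (by simpa [Real.dist_eq] using hh)
  -- the decomposed main term
  have hU : (fun h : ℝ =>
      (d2 / 2) ^ 2 * h ^ 2 + ((F h / h) ^ 2 + (G h / h) ^ 2) / 2
        + d1 * (F h / h - G h / h) + (d2 / 2) * (h * (F h / h + G h / h)))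
      =O[𝓝[≠] (0 : ℝ)] fun h => h ^ 2 := by
    have t1 : (fun h : ℝ => (d2 / 2) ^ 2 * h ^ 2) =O[𝓝[≠] (0 : ℝ)] fun h => h ^ 2 :=
      (isBigO_refl (fun h : ℝ => h ^ 2) _).const_mul_left _
    have t2 : (fun h : ℝ => ((F h / h) ^ 2 + (G h / h) ^ 2) / 2)
        =O[𝓝[≠] (0 : ℝ)] fun h => h ^ 2 := by
      have hA2 : (fun h : ℝ => (F h / h) ^ 2) =O[𝓝[≠] (0 : ℝ)] fun h => h ^ 2 := by
        have : (fun h : ℝ => (F h / h) * (F h / h)) =O[𝓝[≠] (0 : ℝ)]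
            fun h => h ^ 2 * h ^ 2 := hA.mul hA
        have h2 : (fun h : ℝ => h ^ 2 * h ^ 2) =O[𝓝[≠] (0 : ℝ)] fun h => h ^ 2 := by
          simpa using hsq_small.mul (isBigO_refl (fun h : ℝ => h ^ 2) _)
        simpa [sq] using this.trans h2
      have hB2 : (fun h : ℝ => (G h / h) ^ 2) =O[𝓝[≠] (0 : ℝ)] fun h => h ^ 2 := by
        have : (fun h : ℝ => (G h / h) * (G h / h)) =O[𝓝[≠] (0 : ℝ)]
            fun h => h ^ 2 * h ^ 2 := hB.mul hB
        have h2 : (fun h : ℝ => h ^ 2 * h ^ 2) =O[𝓝[≠] (0 : ℝ)] fun h => h ^ 2 := by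
          simpa using hsq_small.mul (isBigO_refl (fun h : ℝ => h ^ 2) _)
        simpa [sq] using this.trans h2
      exact ((hA2.add hB2).const_mul_left (1/2 : ℝ)).congr_left fun h => by ring
    have t3 : (fun h : ℝ => d1 * (F h / h - G h / h)) =O[𝓝[≠] (0 : ℝ)] fun h => h ^ 2 :=
      (hA.sub hB).const_mul_left _
    have t4 : (fun h : ℝ => (d2 / 2) * (h * (F h / h + G h / h)))
        =O[𝓝[≠] (0 : ℝ)] fun h => h ^ 2 := by
      have : (fun h : ℝ => h * (F h / h + G h / h)) =O[𝓝[≠] (0 : ℝ)]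
          fun h => 1 * h ^ 2 := hh_small.mul (hA.add hB)
      exact ((this.congr_right (fun h => one_mul _))).const_mul_left _
    exact ((t1.add t2).add t3).add t4
  -- the target agrees with the decomposition on the punctured neighborhood
  refine hU.congr' (hne.mono fun h hh => ?_) (Filter.Eventually.of_forall fun h => rfl)
  have e1 : φ (x + h) = F h + φ x + d1 * h + d2 * h ^ 2 / 2 := by
    simp only [hFdef]; ring
  have e2 : φ (x - h) = G h + φ x - d1 * h + d2 * h ^ 2 / 2 := by
    simp only [hGdef]; ring
  beta_reduce
  rw [e1, e2]
  field_simp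
  ring
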